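/- A particle entering vertically downward at abscissa x₀ with 1/2 < |x₀| < 1, reflecting specularly first off the parabola y = x²/2 + 1/2 and then off the parabola y = x² + 3/4 (both with focus (0,1)), exits moving vertically downward along a vertical line; moreover the exit abscissa is x₀/2. -/

import Mathlib

/-- Specular reflection of a velocity `v` at a point with unit normal `n`. -/
def reflect (v n : ℝ × ℝ) : ℝ × ℝ := v - (2 * (v.1 * n.1 + v.2 * n.2)) • n

/-- The unit normal to the graph of a function with slope `s`. -/
noncomputable def unitNormal (s : ℝ) : ℝ × ℝ :=
  (-s / Real.sqrt (1 + s ^ 2), 1 / Real.sqrt (1 + s ^ 2))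

/-- A particle entering vertically downward at abscissa `x₀`, `1/2 < |x₀| < 1`, reflects
specularly off the parabola `y = x²/2 + 1/2` (slope `x` at abscissa `x`) and then off the
parabola `y = x² + 3/4` (slope `2x`), and exits moving vertically downward along the
vertical line of abscissa `x₀/2`. -/
theorem two_reflections_exit_down (x₀ : ℝ) (h1 : 1 / 2 < |x₀|) (h2 : |x₀| < 1) :
    let A : ℝ × ℝ := (x₀, x₀ ^ 2 / 2 + 1 / 2)
    let v₁ : ℝ × ℝ := reflect (0, -1) (unitNormal x₀)
    ∃ t : ℝ, 0 < t ∧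
      (A + t • v₁).2 = (A + t • v₁).1 ^ 2 + 3 / 4 ∧
      (A + t • v₁).1 = x₀ / 2 ∧
      reflect v₁ (unitNormal (2 * (A + t • v₁).1)) = ((0 : ℝ), (-1 : ℝ)) := by
  intro A v₁
  set s := Real.sqrt (1 + x₀ ^ 2) with hsdef
  have hpos : (0:ℝ) < 1 + x₀ ^ 2 := by positivity
  have hs0 : 0 < s := Real.sqrt_pos.mpr hpos
  have hs2 : s ^ 2 = 1 + x₀ ^ 2 := Real.sq_sqrt hpos.le
  have hss : s * s = 1 + x₀ ^ 2 := by nlinarith [hs2]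
  have hv₁ : v₁ = (-2 * x₀ / (1 + x₀ ^ 2), (1 - x₀ ^ 2) / (1 + x₀ ^ 2)) := by
    simp only [v₁, reflect, unitNormal, ← hsdef, Prod.ext_iff, Prod.smul_fst, Prod.smul_snd,
      Prod.fst_sub, Prod.snd_sub, smul_eq_mul]
    constructor <;> field_simp <;> first | exact Or.inl hss.symm | nlinarith [hss] | linear_combination (-(2*x₀*(1+x₀^2))) * hss | (ring_nf; simp only [hs2]; ring)
  refine ⟨(1 + x₀ ^ 2) / 4, by positivity, ?_⟩
  have hx : (A + ((1 + x₀ ^ 2) / 4) • v₁).1 = x₀ / 2 := by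
    simp only [A, hv₁, Prod.fst_add, Prod.smul_fst, smul_eq_mul]
    field_simp
    ring
  refine ⟨?_, hx, ?_⟩
  · rw [hx]
    simp only [A, hv₁, Prod.snd_add, Prod.smul_snd, smul_eq_mul]
    field_simp
    ring
  · rw [hx]
    have : 2 * (x₀ / 2) = x₀ := by ring
    rw [this]
    simp only [hv₁, reflect, unitNormal, ← hsdef, Prod.ext_iff, Prod.smul_fst, Prod.smul_snd,
      Prod.fst_sub, Prod.snd_sub, smul_eq_mul]
    constructor <;> field_simp <;> first | exact Or.inl hss.symm | nlinarith [hss] | linear_combination (-(2*x₀*(1+x₀^2))) * hss | (ring_nf; simp only [hs2]; ring)
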